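/- arXiv:2601.16659 — 3 statements merged into one kernel-verified Lean document; each statement's English description precedes it below -/
import Mathlib

section
/- Let p₁ and p₂ be probability measures on a measurable space Ω, and let f : Ω → ℝ be a measurable function with 0 ≤ f(ω) ≤ 1 for all ω. If Var_{p₁}[f] ≤ ε, then Var_{p₂}[f] ≤ ε + 6·√((1/2)·KL(p₂ ‖ p₁)). (Paper's Theorem 2: the predictive variance of an ε-robust counterfactual degrades under a model change by at most 6·√(KL/2).) -/
open MeasureTheory ProbabilityTheory


lemma my_int_bdd {Ω : Type*} [MeasurableSpace Ω] (p : Measure Ω) [IsProbabilityMeasure p]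
    {h : Ω → ℝ} {c : ℝ} (hm : Measurable h) (hb : ∀ ω, |h ω| ≤ c) : Integrable h p :=
  (integrable_const c).mono' hm.aestronglyMeasurable
    (Filter.Eventually.of_forall fun ω => (Real.norm_eq_abs _ ▸ hb ω))

lemma my_kl_nonneg {Ω : Type*} [MeasurableSpace Ω] (μ ν : Measure Ω)
    [IsProbabilityMeasure μ] [IsProbabilityMeasure ν]
    (hac : ν ≪ μ) (hint : Integrable (llr ν μ) ν) :
    0 ≤ ∫ ω, llr ν μ ω ∂ν := by
  have h1 : Integrable (fun ω => (μ.rnDeriv ν ω).toReal) ν :=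
    Measure.integrable_toReal_rnDeriv
  have heq : (fun ω => Real.exp (- llr ν μ ω)) =ᵐ[ν] fun ω => (μ.rnDeriv ν ω).toReal :=
    exp_neg_llr hac
  have h2 : Integrable (fun ω => Real.exp (- llr ν μ ω)) ν := h1.congr heq.symm
  have hJ : Real.exp (∫ ω, - llr ν μ ω ∂ν) ≤ ∫ ω, Real.exp (- llr ν μ ω) ∂ν :=
    convexOn_exp.map_integral_le Real.continuous_exp.continuousOn isClosed_univ
      (Filter.Eventually.of_forall fun x => Set.mem_univ _) hint.neg h2
  have h3 : ∫ ω, Real.exp (- llr ν μ ω) ∂ν ≤ 1 := by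
    rw [integral_congr_ae heq, Measure.integral_toReal_rnDeriv']
    have := ENNReal.toReal_nonneg (a := (μ.singularPart ν) Set.univ)
    simp only [Measure.real, measure_univ, ENNReal.toReal_one]
    linarith
  have : Real.exp (∫ ω, - llr ν μ ω ∂ν) ≤ Real.exp 0 := by
    rw [Real.exp_zero]; exact hJ.trans h3
  rw [Real.exp_le_exp, integral_neg] at this
  linarith

lemma my_dv {Ω : Type*} [MeasurableSpace Ω] (p₁ p₂ : Measure Ω)
    [IsProbabilityMeasure p₁] [IsProbabilityMeasure p₂]
    (hac : p₂ ≪ p₁) (hint : Integrable (llr p₂ p₁) p₂)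
    {g : Ω → ℝ} (hg : Measurable g) {c : ℝ} (hb : ∀ ω, |g ω| ≤ c) :
    ∫ ω, g ω ∂p₂ ≤ (∫ ω, llr p₂ p₁ ω ∂p₂) + Real.log (∫ ω, Real.exp (g ω) ∂p₁) := by
  have hexp : Integrable (fun ω => Real.exp (g ω)) p₁ := by
    refine my_int_bdd p₁ hg.exp (c := Real.exp c) fun ω => ?_
    rw [abs_of_pos (Real.exp_pos _)]
    exact Real.exp_le_exp.2 ((le_abs_self _).trans (hb ω))
  have hgint2 : Integrable g p₂ := my_int_bdd p₂ hg hb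
  haveI : IsProbabilityMeasure (p₁.tilted g) := isProbabilityMeasure_tilted hexp
  have hac' : p₂ ≪ p₁.tilted g := hac.trans (absolutelyContinuous_tilted hexp)
  have hint' : Integrable (llr p₂ (p₁.tilted g)) p₂ :=
    integrable_llr_tilted_right hac hgint2 hint hexp
  have hI : ∫ ω, llr p₂ (p₁.tilted g) ω ∂p₂
      = ∫ ω, llr p₂ p₁ ω ∂p₂ - ∫ ω, g ω ∂p₂ + Real.log (∫ ω, Real.exp (g ω) ∂p₁) :=
    integral_llr_tilted_right hac hgint2 hexp hint
  have h0 : 0 ≤ ∫ ω, llr p₂ (p₁.tilted g) ω ∂p₂ := my_kl_nonneg _ _ hac' hint'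
  rw [hI] at h0
  linarith

lemma my_mgf {Ω : Type*} [MeasurableSpace Ω] (p : Measure Ω) [IsProbabilityMeasure p]
    {h : Ω → ℝ} (hm : Measurable h) (hb : ∀ ω, h ω ∈ Set.Icc (0:ℝ) 1) (t : ℝ) :
    ∫ ω, Real.exp (t * (h ω - ∫ x, h x ∂p)) ∂p ≤ Real.exp (t^2/2) := by
  have hih : Integrable h p := my_int_bdd p (c := 1) hm fun ω => by
    rcases hb ω with ⟨h0, h1⟩; rw [abs_le]; constructor <;> linarith
  set m := ∫ x, h x ∂p with hm_def
  have hm0 : 0 ≤ m := integral_nonneg fun ω => (hb ω).1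
  have hm1 : m ≤ 1 := by
    calc m ≤ ∫ _, (1:ℝ) ∂p := integral_mono hih (integrable_const 1) fun ω => (hb ω).2
    _ = 1 := by simp
  -- pointwise: exp (t*x) ≤ cosh t + x * sinh t for x ∈ [-1,1]
  have hpt : ∀ ω, Real.exp (t * (h ω - m)) ≤
      Real.cosh t + (h ω - m) * Real.sinh t := by
    intro ω
    set x := h ω - m with hx
    have hx1 : -1 ≤ x := by rcases hb ω with ⟨h0, _⟩; simp only [hx]; linarith
    have hx2 : x ≤ 1 := by rcases hb ω with ⟨_, h1⟩; simp only [hx]; linarith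
    have ha : (0:ℝ) ≤ (1 + x)/2 := by linarith
    have hbb : (0:ℝ) ≤ (1 - x)/2 := by linarith
    have habs : (1 + x)/2 + (1 - x)/2 = 1 := by ring
    have := convexOn_exp.2 (Set.mem_univ t) (Set.mem_univ (-t)) ha hbb habs
    simp only [smul_eq_mul] at this
    have harg : (1 + x)/2 * t + (1 - x)/2 * (-t) = t * x := by ring
    rw [harg] at this
    refine this.trans (le_of_eq ?_)
    rw [Real.cosh_eq, Real.sinh_eq]
    ring
  have hintL : Integrable (fun ω => Real.exp (t * (h ω - m))) p := by
    refine my_int_bdd p (((measurable_const.mul (hm.sub measurable_const))).exp)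
      (c := Real.exp |t|) fun ω => ?_
    rw [abs_of_pos (Real.exp_pos _), Real.exp_le_exp]
    have : |t * (h ω - m)| ≤ |t| := by
      rw [abs_mul]
      have : |h ω - m| ≤ 1 := by
        rw [abs_le]; rcases hb ω with ⟨h0, h1⟩; constructor <;> linarith
      calc |t| * |h ω - m| ≤ |t| * 1 := by
            exact mul_le_mul_of_nonneg_left this (abs_nonneg t)
      _ = |t| := mul_one _
    linarith [(abs_le.1 this).2]
  have hintR2 : Integrable (fun ω => (h ω - m) * Real.sinh t) p := by
    exact (hih.sub (integrable_const m)).mul_const _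
  have hintR : Integrable (fun ω => Real.cosh t + (h ω - m) * Real.sinh t) p :=
    (integrable_const _).add hintR2
  have hstep : ∫ ω, Real.exp (t * (h ω - m)) ∂p ≤
      ∫ ω, Real.cosh t + (h ω - m) * Real.sinh t ∂p :=
    integral_mono hintL hintR hpt
  have hRHS : ∫ ω, Real.cosh t + (h ω - m) * Real.sinh t ∂p = Real.cosh t := by
    rw [integral_add (integrable_const _) hintR2,
      integral_mul_const, integral_sub hih (integrable_const m)]
    simp only [MeasureTheory.integral_const, probReal_univ, measure_univ, ENNReal.toReal_one,
      smul_eq_mul, one_mul]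
    rw [← hm_def]
    ring
  rw [hRHS] at hstep
  exact hstep.trans (Real.cosh_le_exp_half_sq t)

lemma my_opt {q K : ℝ} (hK : 0 ≤ K) (h : ∀ t : ℝ, 0 < t → q ≤ K/t + t/2) :
    q ≤ Real.sqrt (2*K) := by
  rcases hK.eq_or_lt with hK0 | hKpos
  · have : q ≤ 0 := by
      refine le_of_forall_pos_le_add fun e he => ?_
      have := h (2*e) (by linarith)
      rw [← hK0] at this
      simp only [zero_div] at this
      linarith
    exact this.trans (Real.sqrt_nonneg _)
  · set s := Real.sqrt (2*K) with hs
    have hspos : 0 < s := Real.sqrt_pos.2 (by linarith)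
    have hs2 : s^2 = 2*K := Real.sq_sqrt (by linarith)
    have := h s hspos
    have hdiv : K/s = s/2 := by
      field_simp
      nlinarith
    rw [hdiv] at this
    linarith

lemma my_shift {Ω : Type*} [MeasurableSpace Ω] (p₁ p₂ : Measure Ω)
    [IsProbabilityMeasure p₁] [IsProbabilityMeasure p₂]
    (hac : p₂ ≪ p₁) (hint : Integrable (llr p₂ p₁) p₂)
    {K : ℝ} (hK0 : 0 ≤ K) (hKL : ∫ ω, llr p₂ p₁ ω ∂p₂ ≤ K)
    {h : Ω → ℝ} (hm : Measurable h) (hb : ∀ ω, h ω ∈ Set.Icc (0:ℝ) 1) :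
    ∫ ω, h ω ∂p₂ - ∫ ω, h ω ∂p₁ ≤ Real.sqrt (2*K) := by
  have hih2 : Integrable h p₂ := my_int_bdd p₂ (c := 1) hm fun ω => by
    rcases hb ω with ⟨h0, h1⟩; rw [abs_le]; constructor <;> linarith
  set m := ∫ x, h x ∂p₁ with hmdef
  refine my_opt hK0 fun t ht => ?_
  have hgm : Measurable (fun ω => t * (h ω - m)) :=
    measurable_const.mul (hm.sub measurable_const)
  have hm0 : 0 ≤ m := integral_nonneg fun ω => (hb ω).1
  have hm1 : m ≤ 1 := by
    have hih1 : Integrable h p₁ := my_int_bdd p₁ (c := 1) hm fun ω => by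
      rcases hb ω with ⟨h0, h1⟩; rw [abs_le]; constructor <;> linarith
    calc m ≤ ∫ _, (1:ℝ) ∂p₁ := integral_mono hih1 (integrable_const 1) fun ω => (hb ω).2
    _ = 1 := by simp
  have hbd : ∀ ω, |t * (h ω - m)| ≤ t := by
    intro ω
    rw [abs_mul, abs_of_pos ht]
    have : |h ω - m| ≤ 1 := by
      rw [abs_le]; rcases hb ω with ⟨h0, h1⟩; constructor <;> linarith
    calc t * |h ω - m| ≤ t * 1 := mul_le_mul_of_nonneg_left this ht.le
    _ = t := mul_one t
  have hdv := my_dv p₁ p₂ hac hint hgm hbd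
  have hexp : Integrable (fun ω => Real.exp (t * (h ω - m))) p₁ := by
    refine my_int_bdd p₁ hgm.exp (c := Real.exp t) fun ω => ?_
    rw [abs_of_pos (Real.exp_pos _), Real.exp_le_exp]
    linarith [(abs_le.1 (hbd ω)).2]
  have hmgf := my_mgf p₁ hm hb t
  have hpos : 0 < ∫ ω, Real.exp (t * (h ω - m)) ∂p₁ := integral_exp_pos hexp
  have hlog : Real.log (∫ ω, Real.exp (t * (h ω - m)) ∂p₁) ≤ t^2/2 := by
    calc Real.log (∫ ω, Real.exp (t * (h ω - m)) ∂p₁)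
        ≤ Real.log (Real.exp (t^2/2)) := Real.log_le_log hpos hmgf
    _ = t^2/2 := Real.log_exp _
  have hIg : ∫ ω, t * (h ω - m) ∂p₂ = t * (∫ ω, h ω ∂p₂ - m) := by
    rw [integral_const_mul, integral_sub hih2 (integrable_const m)]
    simp
  rw [hIg] at hdv
  have hKL' : t * (∫ ω, h ω ∂p₂ - m) ≤ K + t^2/2 := by linarith
  rw [div_add_div _ _ (ne_of_gt ht) two_ne_zero, le_div_iff₀ (by linarith : (0:ℝ) < t * 2)]
  nlinarith

open Classical in
/-- The Kullback–Leibler divergence `KL(p ‖ q) = ∫ log (dp/dq) dp` when `p ≪ q`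
(and the log-likelihood ratio is integrable), and `+∞` otherwise. -/
noncomputable def klDiv {Ω : Type*} [MeasurableSpace Ω] (p q : Measure Ω) : EReal :=
  if p ≪ q ∧ Integrable (llr p q) p then ((∫ ω, llr p q ω ∂p : ℝ) : EReal) else ⊤

/-- The variance of `f` under the probability measure `p`:
`Var_p[f] = ∫ f² dp − (∫ f dp)²`. -/
noncomputable def var {Ω : Type*} [MeasurableSpace Ω] (p : Measure Ω) (f : Ω → ℝ) : ℝ :=
  (∫ ω, (f ω) ^ 2 ∂p) - (∫ ω, f ω ∂p) ^ 2

/-- Paper's Theorem 2: if the counterfactual is ε-robust under `p₁`, i.e.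
`Var_{p₁}[f] ≤ ε`, then for any real `K` bounding `KL(p₂ ‖ p₁)`,
`Var_{p₂}[f] ≤ ε + 6·√((1/2)·K)`. -/
theorem psce_theorem2 {Ω : Type*} [MeasurableSpace Ω]
    (p₁ p₂ : Measure Ω) [IsProbabilityMeasure p₁] [IsProbabilityMeasure p₂]
    (f : Ω → ℝ) (hfm : Measurable f) (hf : ∀ ω, f ω ∈ Set.Icc (0 : ℝ) 1)
    (ε : ℝ) (hε : var p₁ f ≤ ε)
    (K : ℝ) (hK : klDiv p₂ p₁ ≤ (K : EReal)) :
    var p₂ f ≤ ε + 6 * Real.sqrt (1 / 2 * K) := by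
  by_cases hc : p₂ ≪ p₁ ∧ Integrable (llr p₂ p₁) p₂
  case neg =>
    rw [klDiv, if_neg hc] at hK
    exact absurd hK (by simp)
  obtain ⟨hac, hint⟩ := hc
  rw [klDiv, if_pos ⟨hac, hint⟩] at hK
  have hKL : ∫ ω, llr p₂ p₁ ω ∂p₂ ≤ K := by exact_mod_cast hK
  have hK0 : 0 ≤ K := le_trans (my_kl_nonneg p₁ p₂ hac hint) hKL
  have hf2 : ∀ ω, (f ω)^2 ∈ Set.Icc (0:ℝ) 1 := fun ω =>
    ⟨sq_nonneg _, pow_le_one₀ (hf ω).1 (hf ω).2⟩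
  have hA := my_shift p₁ p₂ hac hint hK0 hKL (hfm.pow_const 2) hf2
  have hB := my_shift p₁ p₂ hac hint hK0 hKL hfm hf
  have hg1 : ∀ ω, 1 - f ω ∈ Set.Icc (0:ℝ) 1 := fun ω =>
    ⟨by linarith [(hf ω).2], by linarith [(hf ω).1]⟩
  have hC := my_shift p₁ p₂ hac hint hK0 hKL (measurable_const.sub hfm) hg1
  have hif1 : Integrable f p₁ := my_int_bdd p₁ (c := 1) hfm fun ω => by
    rcases hf ω with ⟨h0, h1⟩; rw [abs_le]; constructor <;> linarith
  have hif2 : Integrable f p₂ := my_int_bdd p₂ (c := 1) hfm fun ω => by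
    rcases hf ω with ⟨h0, h1⟩; rw [abs_le]; constructor <;> linarith
  have hC' : ∫ ω, f ω ∂p₁ - ∫ ω, f ω ∂p₂ ≤ Real.sqrt (2*K) := by
    have e1 : ∫ ω, 1 - f ω ∂p₂ = 1 - ∫ ω, f ω ∂p₂ := by
      rw [integral_sub (integrable_const 1) hif2]; simp
    have e2 : ∫ ω, 1 - f ω ∂p₁ = 1 - ∫ ω, f ω ∂p₁ := by
      rw [integral_sub (integrable_const 1) hif1]; simp
    simp only [Pi.sub_apply] at hC
    rw [e1, e2] at hC
    linarith
  have hm10 : 0 ≤ ∫ ω, f ω ∂p₁ := integral_nonneg fun ω => (hf ω).1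
  have hm20 : 0 ≤ ∫ ω, f ω ∂p₂ := integral_nonneg fun ω => (hf ω).1
  have hm11 : ∫ ω, f ω ∂p₁ ≤ 1 := by
    calc ∫ ω, f ω ∂p₁ ≤ ∫ _, (1:ℝ) ∂p₁ :=
          integral_mono hif1 (integrable_const 1) fun ω => (hf ω).2
    _ = 1 := by simp
  have hm21 : ∫ ω, f ω ∂p₂ ≤ 1 := by
    calc ∫ ω, f ω ∂p₂ ≤ ∫ _, (1:ℝ) ∂p₂ :=
          integral_mono hif2 (integrable_const 1) fun ω => (hf ω).2
    _ = 1 := by simp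
  have hsqrt : Real.sqrt (2*K) = 2 * Real.sqrt (1/2*K) := by
    rw [show (2:ℝ)*K = 2^2*(1/2*K) by ring, Real.sqrt_mul (by positivity) _,
      Real.sqrt_sq (by norm_num : (0:ℝ) ≤ 2)]
  have hD0 : 0 ≤ Real.sqrt (2*K) := Real.sqrt_nonneg _
  have hsq : (∫ ω, f ω ∂p₁)^2 - (∫ ω, f ω ∂p₂)^2 ≤ 2 * Real.sqrt (2*K) := by
    nlinarith
  rw [var] at hε ⊢
  rw [hsqrt] at hA hsq
  linarith
end

section
/- Let p₁ and p₂ be probability measures on a measurable space Ω, and let f : Ω → ℝ be a measurable function with 0 ≤ f(ω) ≤ 1 for all ω. Then |Var_{p₂}[f] − Var_{p₁}[f]| ≤ 6·√((1/2)·KL(p₂ ‖ p₁)); in particular Var_{p₂}[f] ≤ Var_{p₁}[f] + 6·√((1/2)·KL(p₂ ‖ p₁)). (The paper's 'less conservative' observed-variance form of Theorem 2.) -/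
open MeasureTheory ProbabilityTheory

/-- Pointwise bound: `(√x - 1)² ≤ x log x - x + 1` for `x ≥ 0`. -/
lemma aux_phi_ge {x : ℝ} (hx : 0 ≤ x) :
    (Real.sqrt x - 1) ^ 2 ≤ x * Real.log x - x + 1 := by
  rcases eq_or_lt_of_le hx with h0 | h0
  · simp [← h0]
  · have hs : 0 < Real.sqrt x := Real.sqrt_pos.mpr h0
    have hsq : Real.sqrt x ^ 2 = x := Real.sq_sqrt hx
    have hlog : 1 - (Real.sqrt x)⁻¹ ≤ Real.log (Real.sqrt x) :=
      Real.one_sub_inv_le_log_of_pos hs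
    rw [Real.log_sqrt hx] at hlog
    have h2 := mul_le_mul_of_nonneg_left hlog hs.le
    rw [mul_sub, mul_inv_cancel₀ hs.ne'] at h2
    -- h2 : √x - 1 ≤ √x * (log x / 2)
    nlinarith [mul_le_mul_of_nonneg_left h2 hs.le, hsq, hs]

/-- Pointwise bound used for the Pinsker-type estimate. -/
lemma aux_ptwise {x t : ℝ} (hx : 0 ≤ x) (ht : 0 < t) :
    |x - 1| ≤ 4 / (3 * t) * (x * Real.log x - x + 1) + t / 2 * (x + 2) := by
  have hφ := aux_phi_ge hx
  set s := Real.sqrt x with hsdef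
  have hs0 : 0 ≤ s := Real.sqrt_nonneg x
  have hsq : s ^ 2 = x := Real.sq_sqrt hx
  set L := Real.log x with hL
  rw [show 4 / (3 * t) * (x * L - x + 1) + t / 2 * (x + 2)
      = (4 * (x * L - x + 1) + 3 * t ^ 2 / 2 * (x + 2)) / (3 * t) by
        field_simp]
  rw [le_div_iff₀ (by positivity)]
  rcases abs_cases (x - 1) with ⟨h, _⟩ | ⟨h, _⟩ <;> rw [h]
  · nlinarith [sq_nonneg (2 * (s - 1) - 3 / 4 * t * (s + 1)),
      mul_nonneg (sq_nonneg t) (sq_nonneg (5 * s - 3)), sq_nonneg t, hφ, hsq, ht.le]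
  · nlinarith [sq_nonneg (2 * (s - 1) + 3 / 4 * t * (s + 1)),
      mul_nonneg (sq_nonneg t) (sq_nonneg (5 * s - 3)), sq_nonneg t, hφ, hsq, ht.le]

/-- Pinsker-type L¹ bound on the Radon–Nikodym density. -/
lemma aux_L1 {Ω : Type*} [MeasurableSpace Ω]
    (p₁ p₂ : Measure Ω) [IsProbabilityMeasure p₁] [IsProbabilityMeasure p₂]
    (hac : p₂ ≪ p₁) (hint : Integrable (llr p₂ p₁) p₂)
    (K : ℝ) (hKle : ∫ ω, llr p₂ p₁ ω ∂p₂ ≤ K) :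
    ∫ ω, |(p₂.rnDeriv p₁ ω).toReal - 1| ∂p₁ ≤ 2 * Real.sqrt (2 * K) := by
  set r : Ω → ℝ := fun ω => (p₂.rnDeriv p₁ ω).toReal with hr
  have hrnn : ∀ ω, 0 ≤ r ω := fun ω => ENNReal.toReal_nonneg
  have hrint : Integrable r p₁ := Measure.integrable_toReal_rnDeriv
  have hr1 : ∫ ω, r ω ∂p₁ = 1 := by
    rw [hr, Measure.integral_toReal_rnDeriv hac]; simp
  have hrlog : Integrable (fun ω => r ω * Real.log (r ω)) p₁ := by
    have := (integrable_rnDeriv_smul_iff hac).mpr hint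
    simpa [llr, smul_eq_mul] using this
  have hKL' : ∫ ω, r ω * Real.log (r ω) ∂p₁ ≤ K := by
    have h := integral_rnDeriv_smul (f := llr p₂ p₁) hac
    simp only [smul_eq_mul] at h
    calc ∫ ω, r ω * Real.log (r ω) ∂p₁ = ∫ ω, llr p₂ p₁ ω ∂p₂ := h
      _ ≤ K := hKle
  set φr : Ω → ℝ := fun ω => r ω * Real.log (r ω) - r ω + 1 with hφr
  have hφint : Integrable φr p₁ := (hrlog.sub hrint).add (integrable_const 1)
  have hφnn : ∀ ω, 0 ≤ φr ω := fun ω =>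
    le_trans (sq_nonneg _) (aux_phi_ge (hrnn ω))
  set K' := ∫ ω, φr ω ∂p₁ with hK'
  have hK'nn : 0 ≤ K' := integral_nonneg hφnn
  have hsub : Integrable (fun ω => r ω * Real.log (r ω) - r ω) p₁ := hrlog.sub hrint
  have hK'le : K' ≤ K := by
    have heq : K' = ∫ ω, r ω * Real.log (r ω) ∂p₁ := by
      rw [hK']
      show ∫ ω, (r ω * Real.log (r ω) - r ω + 1) ∂p₁ = _
      rw [integral_add hsub (integrable_const 1),
        integral_sub hrlog hrint, hr1, integral_const]
      simp
    rw [heq]; exact hKL'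
  have habs_int : Integrable (fun ω => |r ω - 1|) p₁ :=
    (hrint.sub (integrable_const 1)).abs
  have key : ∀ t : ℝ, 0 < t →
      ∫ ω, |r ω - 1| ∂p₁ ≤ 4 / (3 * t) * K' + 3 / 2 * t := by
    intro t ht
    have hA : Integrable (fun ω => 4 / (3 * t) * φr ω) p₁ := hφint.const_mul _
    have hr2 : Integrable (fun ω => r ω + 2) p₁ := hrint.add (integrable_const 2)
    have hB : Integrable (fun ω => t / 2 * (r ω + 2)) p₁ := hr2.const_mul _
    have hRint : Integrable (fun ω => 4 / (3 * t) * φr ω + t / 2 * (r ω + 2)) p₁ :=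
      hA.add hB
    have hmono : ∫ ω, |r ω - 1| ∂p₁
        ≤ ∫ ω, (4 / (3 * t) * φr ω + t / 2 * (r ω + 2)) ∂p₁ := by
      refine integral_mono habs_int hRint fun ω => ?_
      exact aux_ptwise (hrnn ω) ht
    refine hmono.trans ?_
    have heq : ∫ ω, (4 / (3 * t) * φr ω + t / 2 * (r ω + 2)) ∂p₁
        = 4 / (3 * t) * K' + t / 2 * (1 + 2) := by
      rw [integral_add hA hB, integral_const_mul, integral_const_mul,
        integral_add hrint (integrable_const 2), hr1, integral_const]
      simp [hK']
    rw [heq]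
    have : t / 2 * (1 + 2) = 3 / 2 * t := by ring
    linarith [this.ge]
  rcases eq_or_lt_of_le hK'nn with hK0 | hK0
  · have hle0 : ∫ ω, |r ω - 1| ∂p₁ ≤ 0 := by
      refine le_of_forall_pos_le_add fun ε hε => ?_
      have := key (2 / 3 * ε) (by positivity)
      rw [← hK0] at this
      calc ∫ ω, |r ω - 1| ∂p₁ ≤ 4 / (3 * (2 / 3 * ε)) * 0 + 3 / 2 * (2 / 3 * ε) := this
        _ = ε := by ring
        _ ≤ 0 + ε := by linarith
    exact hle0.trans (by positivity)
  · set s := Real.sqrt (2 * K') with hsdef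
    have hs0 : 0 < s := Real.sqrt_pos.mpr (by linarith)
    have hssq : s ^ 2 = 2 * K' := Real.sq_sqrt (by linarith)
    have := key (2 * s / 3) (by positivity)
    have hval : 4 / (3 * (2 * s / 3)) * K' + 3 / 2 * (2 * s / 3) = 2 * s := by
      field_simp
      nlinarith [hssq, hs0]
    rw [hval] at this
    refine this.trans ?_
    have : s ≤ Real.sqrt (2 * K) := Real.sqrt_le_sqrt (by linarith)
    linarith

/-- Bound on the change in expectation of a `[0,1]`-valued function. -/
lemma aux_diff_bound {Ω : Type*} [MeasurableSpace Ω]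
    (p₁ p₂ : Measure Ω) [IsProbabilityMeasure p₁] [IsProbabilityMeasure p₂]
    (hac : p₂ ≪ p₁) (g : Ω → ℝ) (hg : Measurable g)
    (hg01 : ∀ ω, g ω ∈ Set.Icc (0 : ℝ) 1) :
    |(∫ ω, g ω ∂p₂) - ∫ ω, g ω ∂p₁|
      ≤ (∫ ω, |(p₂.rnDeriv p₁ ω).toReal - 1| ∂p₁) / 2 := by
  set r : Ω → ℝ := fun ω => (p₂.rnDeriv p₁ ω).toReal with hr
  have hrint : Integrable r p₁ := Measure.integrable_toReal_rnDeriv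
  have hr1 : ∫ ω, r ω ∂p₁ = 1 := by
    rw [hr, Measure.integral_toReal_rnDeriv hac]; simp
  have hgb : ∀ ω, ‖g ω‖ ≤ 1 := fun ω => by
    rw [Real.norm_eq_abs, abs_le]; exact ⟨by linarith [(hg01 ω).1], (hg01 ω).2⟩
  have hgint₁ : Integrable g p₁ :=
    Integrable.mono' (integrable_const 1) hg.aestronglyMeasurable (ae_of_all _ hgb)
  have hgint₂ : Integrable g p₂ :=
    Integrable.mono' (integrable_const 1) hg.aestronglyMeasurable (ae_of_all _ hgb)
  have hrg : Integrable (fun ω => r ω * g ω) p₁ := by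
    have := (integrable_rnDeriv_smul_iff hac).mpr hgint₂
    simpa [smul_eq_mul] using this
  have h₂ : ∫ ω, g ω ∂p₂ = ∫ ω, r ω * g ω ∂p₁ := by
    have h := integral_rnDeriv_smul (f := g) hac
    simp only [smul_eq_mul] at h
    exact h.symm
  have hexp : ∀ ω, (r ω - 1) * (g ω - 1 / 2)
      = r ω * g ω - g ω - (1 / 2) * r ω + 1 / 2 := fun ω => by ring
  have hIa : Integrable (fun ω => r ω * g ω - g ω) p₁ := hrg.sub hgint₁
  have hcr : Integrable (fun ω => (1 / 2 : ℝ) * r ω) p₁ := hrint.const_mul _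
  have hIb : Integrable (fun ω => r ω * g ω - g ω - 1 / 2 * r ω) p₁ := hIa.sub hcr
  have hI : Integrable (fun ω => (r ω - 1) * (g ω - 1 / 2)) p₁ := by
    simp only [hexp]
    exact hIb.add (integrable_const _)
  have hval : ∫ ω, (r ω - 1) * (g ω - 1 / 2) ∂p₁
      = (∫ ω, g ω ∂p₂) - ∫ ω, g ω ∂p₁ := by
    simp only [hexp]
    rw [integral_add hIb (integrable_const _),
      integral_sub hIa hcr,
      integral_sub hrg hgint₁, integral_const_mul, hr1, integral_const, h₂]
    simp [measure_univ]
  have habs_int : Integrable (fun ω => |r ω - 1|) p₁ :=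
    (hrint.sub (integrable_const 1)).abs
  calc |(∫ ω, g ω ∂p₂) - ∫ ω, g ω ∂p₁|
      = |∫ ω, (r ω - 1) * (g ω - 1 / 2) ∂p₁| := by rw [hval]
    _ ≤ ∫ ω, |r ω - 1| * |g ω - 1 / 2| ∂p₁ := by
        have h := norm_integral_le_integral_norm (μ := p₁)
          (fun ω => (r ω - 1) * (g ω - 1 / 2))
        simpa [Real.norm_eq_abs, abs_mul] using h
    _ ≤ ∫ ω, |r ω - 1| / 2 ∂p₁ := by
        have hIabs : Integrable (fun ω => |r ω - 1| * |g ω - 1 / 2|) p₁ := by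
          simpa [abs_mul] using hI.abs
        refine integral_mono hIabs (habs_int.div_const 2) fun ω => ?_
        have h1 : |g ω - 1 / 2| ≤ 1 / 2 := by
          rw [abs_le]; constructor <;> [linarith [(hg01 ω).1]; linarith [(hg01 ω).2]]
        calc |r ω - 1| * |g ω - 1 / 2| ≤ |r ω - 1| * (1 / 2) :=
              mul_le_mul_of_nonneg_left h1 (abs_nonneg _)
          _ = |r ω - 1| / 2 := by ring
    _ = (∫ ω, |r ω - 1| ∂p₁) / 2 := integral_div 2 _

/-- The less conservative observed-variance form of the paper's Theorem 2: for `f` taking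
values in `[0,1]` and any real `K` bounding `KL(p₂ ‖ p₁)`,
`|Var_{p₂}[f] − Var_{p₁}[f]| ≤ 6·√((1/2)·K)`, and in particular
`Var_{p₂}[f] ≤ Var_{p₁}[f] + 6·√((1/2)·K)`. -/
theorem psce_theorem2_observed {Ω : Type*} [MeasurableSpace Ω]
    (p₁ p₂ : Measure Ω) [IsProbabilityMeasure p₁] [IsProbabilityMeasure p₂]
    (f : Ω → ℝ) (hfm : Measurable f) (hf : ∀ ω, f ω ∈ Set.Icc (0 : ℝ) 1)
    (K : ℝ) (hK : klDiv p₂ p₁ ≤ (K : EReal)) :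
    |var p₂ f - var p₁ f| ≤ 6 * Real.sqrt (1 / 2 * K) ∧
      var p₂ f ≤ var p₁ f + 6 * Real.sqrt (1 / 2 * K) := by
  classical
  -- Extract the KL divergence facts
  by_cases hc : p₂ ≪ p₁ ∧ Integrable (llr p₂ p₁) p₂
  swap
  · exfalso
    rw [klDiv, if_neg hc] at hK
    exact (hK.trans_lt (EReal.coe_lt_top K)).ne rfl
  obtain ⟨hac, hint⟩ := hc
  have hKle : ∫ ω, llr p₂ p₁ ω ∂p₂ ≤ K := by
    rw [klDiv, if_pos ⟨hac, hint⟩] at hK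
    exact_mod_cast hK
  set L1 := ∫ ω, |(p₂.rnDeriv p₁ ω).toReal - 1| ∂p₁ with hL1def
  have hL1 : L1 ≤ 2 * Real.sqrt (2 * K) := aux_L1 p₁ p₂ hac hint K hKle
  -- bounds on the two integral differences
  have hdf : |(∫ ω, f ω ∂p₂) - ∫ ω, f ω ∂p₁| ≤ L1 / 2 :=
    aux_diff_bound p₁ p₂ hac f hfm hf
  have hdf2 : |(∫ ω, (f ω) ^ 2 ∂p₂) - ∫ ω, (f ω) ^ 2 ∂p₁| ≤ L1 / 2 := by
    refine aux_diff_bound p₁ p₂ hac (fun ω => (f ω) ^ 2) (hfm.pow_const 2) fun ω => ?_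
    exact ⟨sq_nonneg _, pow_le_one₀ (hf ω).1 (hf ω).2⟩
  -- the means are in [0,1]
  have hfb : ∀ ω, ‖f ω‖ ≤ 1 := fun ω => by
    rw [Real.norm_eq_abs, abs_le]; exact ⟨by linarith [(hf ω).1], (hf ω).2⟩
  have hfi₁ : Integrable f p₁ :=
    Integrable.mono' (integrable_const 1) hfm.aestronglyMeasurable (ae_of_all _ hfb)
  have hfi₂ : Integrable f p₂ :=
    Integrable.mono' (integrable_const 1) hfm.aestronglyMeasurable (ae_of_all _ hfb)
  set a₁ := ∫ ω, f ω ∂p₁ with ha₁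
  set a₂ := ∫ ω, f ω ∂p₂ with ha₂
  have ha₁0 : 0 ≤ a₁ := integral_nonneg fun ω => (hf ω).1
  have ha₂0 : 0 ≤ a₂ := integral_nonneg fun ω => (hf ω).1
  have ha₁1 : a₁ ≤ 1 := by
    calc a₁ ≤ ∫ _, (1 : ℝ) ∂p₁ := integral_mono hfi₁ (integrable_const 1) fun ω => (hf ω).2
      _ = 1 := by simp
  have ha₂1 : a₂ ≤ 1 := by
    calc a₂ ≤ ∫ _, (1 : ℝ) ∂p₂ := integral_mono hfi₂ (integrable_const 1) fun ω => (hf ω).2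
      _ = 1 := by simp
  -- assemble the variance bound
  have hsq_diff : |a₂ ^ 2 - a₁ ^ 2| ≤ L1 := by
    have h : a₂ ^ 2 - a₁ ^ 2 = (a₂ - a₁) * (a₂ + a₁) := by ring
    rw [h, abs_mul]
    have h2 : |a₂ + a₁| ≤ 2 := by rw [abs_le]; constructor <;> linarith
    calc |a₂ - a₁| * |a₂ + a₁| ≤ (L1 / 2) * 2 :=
          mul_le_mul hdf h2 (abs_nonneg _) (by linarith [abs_nonneg (a₂ - a₁)])
      _ = L1 := by ring
  have hmain : |var p₂ f - var p₁ f| ≤ 3 / 2 * L1 := by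
    have h : var p₂ f - var p₁ f
        = ((∫ ω, (f ω) ^ 2 ∂p₂) - ∫ ω, (f ω) ^ 2 ∂p₁) - (a₂ ^ 2 - a₁ ^ 2) := by
      simp only [var, ha₁, ha₂]; ring
    rw [h]
    calc |((∫ ω, (f ω) ^ 2 ∂p₂) - ∫ ω, (f ω) ^ 2 ∂p₁) - (a₂ ^ 2 - a₁ ^ 2)|
        ≤ |(∫ ω, (f ω) ^ 2 ∂p₂) - ∫ ω, (f ω) ^ 2 ∂p₁| + |a₂ ^ 2 - a₁ ^ 2| :=
          abs_sub _ _
      _ ≤ L1 / 2 + L1 := add_le_add hdf2 hsq_diff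
      _ = 3 / 2 * L1 := by ring
  have hsqrt : Real.sqrt (2 * K) = 2 * Real.sqrt (1 / 2 * K) := by
    rw [show (2 : ℝ) * K = 2 ^ 2 * (1 / 2 * K) by ring,
      Real.sqrt_mul (by positivity) (1 / 2 * K), Real.sqrt_sq (by norm_num : (0:ℝ) ≤ 2)]
  have hfinal : |var p₂ f - var p₁ f| ≤ 6 * Real.sqrt (1 / 2 * K) := by
    calc |var p₂ f - var p₁ f| ≤ 3 / 2 * L1 := hmain
      _ ≤ 3 / 2 * (2 * Real.sqrt (2 * K)) := by linarith
      _ = 6 * Real.sqrt (1 / 2 * K) := by rw [hsqrt]; ring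
  exact ⟨hfinal, by linarith [le_abs_self (var p₂ f - var p₁ f), hfinal]⟩
end

section
/- Let p₁ and p₂ be probability measures on a measurable space Ω, let f : Ω → ℝ be measurable with 0 ≤ f(ω) ≤ 1 for all ω, and suppose ∫ f dp₁ ≥ 1 − δ and Var_{p₁}[f] ≤ ε, i.e. the counterfactual lies in the ⟨δ, ε⟩-set under p₁. Then simultaneously ∫ f dp₂ ≥ (1 − δ) − 2·√((1/2)·KL(p₂ ‖ p₁)) and Var_{p₂}[f] ≤ ε + 6·√((1/2)·KL(p₂ ‖ p₁)). (Combined guarantee of the paper's Theorems 1 and 2 for counterfactuals in the ⟨δ, ε⟩-set.) -/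
open MeasureTheory ProbabilityTheory

open Real

lemma psce_arith {a₁ a₂ b₁ b₂ T S ε : ℝ} (ha1l : 0 ≤ a₁) (ha1u : a₁ ≤ 1)
    (ha2l : 0 ≤ a₂) (ha2u : a₂ ≤ 1) (hT0 : 0 ≤ T) (hd1 : a₁ - a₂ ≤ T)
    (hd2 : b₂ - b₁ ≤ T) (hvar : b₁ - a₁^2 ≤ ε) (hTS : T ≤ S) :
    b₂ - a₂^2 ≤ ε + 3 * S := by
  have key : a₁^2 - a₂^2 ≤ 2 * T := by
    nlinarith [mul_le_mul_of_nonneg_right hd1 (show (0:ℝ) ≤ a₁ + a₂ by linarith),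
      mul_le_mul_of_nonneg_left (show a₁ + a₂ ≤ 2 by linarith) hT0]
  linarith

lemma psce_aux_pointwise {x : ℝ} (hx : 0 ≤ x) :
    (3/2) * (x - 1)^2 ≤ (x * Real.log x - x + 1) * (x + 2) := by
  set F : ℝ → ℝ := fun y => (y * Real.log y - y + 1) * (y + 2) - (3/2) * (y - 1)^2 with hFdef
  set G : ℝ → ℝ := fun y => (2*y + 2) * Real.log y - 4*y + 4 with hGdef
  have hF1 : F 1 = 0 := by simp [hFdef, Real.log_one]
  have hFderiv : ∀ y : ℝ, 0 < y → HasDerivAt F (G y) y := by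
    intro y hy
    have h1 : HasDerivAt (fun z : ℝ => z * Real.log z) (Real.log y + 1) y :=
      Real.hasDerivAt_mul_log hy.ne'
    have h2 : HasDerivAt (fun z : ℝ => z * Real.log z - z + 1) (Real.log y + 1 - 1) y :=
      (h1.sub (hasDerivAt_id y)).add_const 1
    have h3 : HasDerivAt (fun z : ℝ => z + 2) 1 y := (hasDerivAt_id y).add_const 2
    have h4 := h2.mul h3
    have h5 : HasDerivAt (fun z : ℝ => (3/2) * (z - 1)^2) ((3/2) * (2 * (y - 1)^1 * 1)) y :=
      (((hasDerivAt_id y).sub_const 1).pow 2).const_mul (3/2)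
    have h6 := h4.sub h5
    refine (show HasDerivAt F _ y from h6).congr_deriv ?_
    simp [hGdef]
    ring
  have hGderiv : ∀ y : ℝ, 0 < y → HasDerivAt G (2 * Real.log y + 2/y - 2) y := by
    intro y hy
    have g1 : HasDerivAt (fun z : ℝ => 2*z + 2) 2 y := by
      simpa using ((hasDerivAt_id y).const_mul 2).add_const 2
    have g2 := g1.mul (Real.hasDerivAt_log hy.ne')
    have g3 : HasDerivAt (fun z : ℝ => 4*z) 4 y := by
      simpa using (hasDerivAt_id y).const_mul 4
    have g4 := (g2.sub g3).add_const 4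
    refine (show HasDerivAt G _ y from g4).congr_deriv ?_
    field_simp
    ring
  have hG2nn : ∀ y : ℝ, 0 < y → 0 ≤ 2 * Real.log y + 2/y - 2 := by
    intro y hy
    have h := Real.log_le_sub_one_of_pos (inv_pos.2 hy)
    rw [Real.log_inv] at h
    have h2 : 2/y = 2 * y⁻¹ := by rw [div_eq_mul_inv]
    linarith [h]
  have hGmono : MonotoneOn G (Set.Ioi (0:ℝ)) := by
    apply monotoneOn_of_deriv_nonneg (convex_Ioi 0)
    · intro y hy
      exact (hGderiv y hy).continuousAt.continuousWithinAt
    · rw [interior_Ioi]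
      intro y hy
      exact (hGderiv y hy).differentiableAt.differentiableWithinAt
    · rw [interior_Ioi]
      intro y hy
      rw [(hGderiv y hy).deriv]
      exact hG2nn y hy
  have hG1 : G 1 = 0 := by simp [hGdef]
  have hFcont : Continuous F := by
    apply Continuous.sub
    · exact ((Real.continuous_mul_log.sub continuous_id).add continuous_const).mul
        (continuous_id.add continuous_const)
    · exact continuous_const.mul ((continuous_id.sub continuous_const).pow 2)
  have hFanti : AntitoneOn F (Set.Icc (0:ℝ) 1) := by
    apply antitoneOn_of_deriv_nonpos (convex_Icc 0 1) hFcont.continuousOn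
    · rw [interior_Icc]
      intro y hy
      exact (hFderiv y hy.1).differentiableAt.differentiableWithinAt
    · rw [interior_Icc]
      intro y hy
      rw [(hFderiv y hy.1).deriv]
      have := hGmono (Set.mem_Ioi.2 hy.1) (Set.mem_Ioi.2 one_pos) hy.2.le
      rw [hG1] at this
      exact this
  have hFmono : MonotoneOn F (Set.Ici (1:ℝ)) := by
    apply monotoneOn_of_deriv_nonneg (convex_Ici 1) hFcont.continuousOn
    · rw [interior_Ici]
      intro y hy
      exact (hFderiv y (lt_trans one_pos hy)).differentiableAt.differentiableWithinAt
    · rw [interior_Ici]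
      intro y hy
      rw [(hFderiv y (lt_trans one_pos hy)).deriv]
      have := hGmono (Set.mem_Ioi.2 one_pos) (Set.mem_Ioi.2 (lt_trans one_pos hy)) hy.le
      rw [hG1] at this
      exact this
  have hFx : 0 ≤ F x := by
    rcases le_or_gt x 1 with hx1 | hx1
    · have := hFanti (Set.mem_Icc.2 ⟨hx, hx1⟩) (Set.mem_Icc.2 ⟨zero_le_one, le_refl 1⟩) hx1
      rw [hF1] at this
      exact this
    · have := hFmono (Set.mem_Ici.2 (le_refl 1)) (Set.mem_Ici.2 hx1.le) hx1.le
      rw [hF1] at this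
      exact this
  have heq : F x = (x * Real.log x - x + 1) * (x + 2) - (3/2) * (x - 1)^2 := rfl
  rw [heq] at hFx
  linarith

/-- Combined guarantee of the paper's Theorems 1 and 2 for counterfactuals in the
`⟨δ, ε⟩`-set: if `∫ f dp₁ ≥ 1 − δ` (δ-safety) and `Var_{p₁}[f] ≤ ε` (ε-robustness), then
for any real `K` bounding `KL(p₂ ‖ p₁)`, simultaneously
`∫ f dp₂ ≥ (1 − δ) − 2·√((1/2)·K)` and `Var_{p₂}[f] ≤ ε + 6·√((1/2)·K)`. -/
theorem psce_delta_eps_set_guarantee {Ω : Type*} [MeasurableSpace Ω]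
    (p₁ p₂ : Measure Ω) [IsProbabilityMeasure p₁] [IsProbabilityMeasure p₂]
    (f : Ω → ℝ) (hfm : Measurable f) (hf : ∀ ω, f ω ∈ Set.Icc (0 : ℝ) 1)
    (δ ε : ℝ) (hδsafe : 1 - δ ≤ ∫ ω, f ω ∂p₁) (hεrobust : var p₁ f ≤ ε)
    (K : ℝ) (hK : klDiv p₂ p₁ ≤ (K : EReal)) :
    (1 - δ) - 2 * Real.sqrt (1 / 2 * K) ≤ ∫ ω, f ω ∂p₂ ∧
      var p₂ f ≤ ε + 6 * Real.sqrt (1 / 2 * K) := by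
  classical
  rw [klDiv] at hK
  split_ifs at hK with h
  swap
  · exact absurd hK (by simp)
  obtain ⟨hac, hll⟩ := h
  have hKL' : ∫ ω, llr p₂ p₁ ω ∂p₂ ≤ K := by exact_mod_cast hK
  set G : Ω → ℝ := fun ω => (p₂.rnDeriv p₁ ω).toReal with hGdef
  have hGmeas : Measurable G := (Measure.measurable_rnDeriv p₂ p₁).ennreal_toReal
  have hGnn : ∀ ω, 0 ≤ G ω := fun ω => ENNReal.toReal_nonneg
  have hGint : Integrable G p₁ := Measure.integrable_toReal_rnDeriv
  have hGint1 : ∫ ω, G ω ∂p₁ = 1 := by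
    rw [hGdef, Measure.integral_toReal_rnDeriv hac]; simp
  have hLint : Integrable (fun ω => G ω * Real.log (G ω)) p₁ := by
    have := (integrable_rnDeriv_smul_iff hac).mpr hll
    simpa [llr, smul_eq_mul, hGdef] using this
  have hKLeq : ∫ ω, llr p₂ p₁ ω ∂p₂ = ∫ ω, G ω * Real.log (G ω) ∂p₁ := by
    rw [← integral_rnDeriv_smul hac]
    simp [llr, smul_eq_mul, hGdef]
  set KL : ℝ := ∫ ω, G ω * Real.log (G ω) ∂p₁ with hKLdef
  have hKLK : KL ≤ K := by rw [← hKLeq]; exact hKL'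
  -- φ := G log G - G + 1
  have hφint : Integrable (fun ω => G ω * Real.log (G ω) - G ω + 1) p₁ :=
    (hLint.sub hGint).add (integrable_const 1)
  have hsubint : Integrable (fun ω => G ω * Real.log (G ω) - G ω) p₁ := hLint.sub hGint
  have hφval : ∫ ω, (G ω * Real.log (G ω) - G ω + 1) ∂p₁ = KL := by
    rw [integral_add hsubint (integrable_const 1),
      integral_sub hLint hGint, hGint1]
    simp [hKLdef]
  have hφnn : ∀ x : ℝ, 0 ≤ x → 0 ≤ x * Real.log x - x + 1 := by
    intro x hx
    nlinarith [psce_aux_pointwise hx, sq_nonneg (x - 1)]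
  have hKL0 : 0 ≤ KL := by
    rw [← hφval]
    exact integral_nonneg fun ω => hφnn _ (hGnn ω)
  have hK0 : 0 ≤ K := hKL0.trans hKLK
  -- ψ := (G-1)²/(G+2)
  set ψ : Ω → ℝ := fun ω => (G ω - 1)^2 / (G ω + 2) with hψdef
  have hGp2 : ∀ ω, (0:ℝ) < G ω + 2 := fun ω => by linarith [hGnn ω]
  have hψnn : ∀ ω, 0 ≤ ψ ω := fun ω => div_nonneg (sq_nonneg _) (hGp2 ω).le
  have hψle : ∀ ω, ψ ω ≤ (2/3) * (G ω * Real.log (G ω) - G ω + 1) := by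
    intro ω
    rw [hψdef, div_le_iff₀ (hGp2 ω)]
    nlinarith [psce_aux_pointwise (hGnn ω)]
  have hψmeas : Measurable ψ := by
    apply Measurable.div
    · exact (hGmeas.sub measurable_const).pow_const 2
    · exact hGmeas.add measurable_const
  have hψint : Integrable ψ p₁ := by
    apply Integrable.mono' (hφint.const_mul (2/3)) hψmeas.aestronglyMeasurable
    exact ae_of_all _ fun ω => by
      rw [Real.norm_eq_abs, abs_of_nonneg (hψnn ω)]; exact hψle ω
  have hA0 : 0 ≤ ∫ ω, ψ ω ∂p₁ := integral_nonneg hψnn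
  have hAle : ∫ ω, ψ ω ∂p₁ ≤ (2/3) * K := by
    calc ∫ ω, ψ ω ∂p₁ ≤ ∫ ω, (2/3) * (G ω * Real.log (G ω) - G ω + 1) ∂p₁ :=
          integral_mono hψint (hφint.const_mul (2/3)) hψle
      _ = (2/3) * KL := by rw [integral_const_mul, hφval]
      _ ≤ (2/3) * K := by linarith
  -- T := ∫ |G - 1|
  have hTint : Integrable (fun ω => |G ω - 1|) p₁ := (hGint.sub (integrable_const 1)).abs
  set T : ℝ := ∫ ω, |G ω - 1| ∂p₁ with hTdef
  have hT0 : 0 ≤ T := integral_nonneg fun ω => abs_nonneg _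
  have hsumint : Integrable (fun ω => G ω + 2) p₁ := hGint.add (integrable_const 2)
  have hG2intval : ∫ ω, (G ω + 2) ∂p₁ = 3 := by
    rw [integral_add hGint (integrable_const 2), hGint1]
    norm_num
  have hTsq : T^2 ≤ 2 * K := by
    have key : ∀ t : ℝ, 0 < t → 2 * t * T ≤ t^2 * 3 + ∫ ω, ψ ω ∂p₁ := by
      intro t ht
      have hpt : ∀ ω, 2 * t * |G ω - 1| ≤ t^2 * (G ω + 2) + ψ ω := by
        intro ω
        have hid : ψ ω * (G ω + 2) = (G ω - 1)^2 := by
          rw [hψdef]; field_simp [(hGp2 ω).ne']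
        nlinarith [sq_nonneg (t * (G ω + 2) - |G ω - 1|), sq_abs (G ω - 1), hGp2 ω,
          hψnn ω, mul_pos ht (hGp2 ω)]
      calc 2 * t * T = ∫ ω, 2 * t * |G ω - 1| ∂p₁ := by rw [hTdef, integral_const_mul]
        _ ≤ ∫ ω, (t^2 * (G ω + 2) + ψ ω) ∂p₁ := by
            have hts : Integrable (fun ω => t^2 * (G ω + 2)) p₁ := hsumint.const_mul _
            exact integral_mono (hTint.const_mul _) (hts.add hψint) hpt
        _ = t^2 * 3 + ∫ ω, ψ ω ∂p₁ := by
            have hts : Integrable (fun ω => t^2 * (G ω + 2)) p₁ := hsumint.const_mul _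
            rw [integral_add hts hψint, integral_const_mul, hG2intval]
    rcases eq_or_lt_of_le hT0 with hTz | hTpos
    · rw [← hTz]; nlinarith [hK0]
    · have := key (T/3) (by positivity)
      nlinarith [hAle]
  have hTle : T ≤ Real.sqrt (2 * K) := by
    calc T = Real.sqrt (T^2) := (Real.sqrt_sq hT0).symm
      _ ≤ Real.sqrt (2 * K) := Real.sqrt_le_sqrt hTsq
  have hsqrt2 : Real.sqrt (2 * K) = 2 * Real.sqrt (1/2 * K) := by
    rw [show (2:ℝ) * K = 2^2 * (1/2 * K) by ring,
      Real.sqrt_mul (by positivity) (1/2 * K), Real.sqrt_sq (by norm_num : (0:ℝ) ≤ 2)]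
  have hT2K : T ≤ 2 * Real.sqrt (1/2 * K) := hsqrt2 ▸ hTle
  -- general change-of-measure bound for [0,1]-valued measurable functions
  have hdiff : ∀ g : Ω → ℝ, Measurable g → (∀ ω, g ω ∈ Set.Icc (0:ℝ) 1) →
      |(∫ ω, g ω ∂p₂) - ∫ ω, g ω ∂p₁| ≤ T := by
    intro g hgm hgb
    have hbound : ∀ {μ : Measure Ω}, IsProbabilityMeasure μ → Integrable g μ := by
      intro μ hμ
      refine Integrable.mono' (integrable_const 1) hgm.aestronglyMeasurable ?_
      exact ae_of_all _ fun ω => by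
        rw [Real.norm_eq_abs, abs_of_nonneg (hgb ω).1]; exact (hgb ω).2
    have hint1 : Integrable g p₁ := hbound inferInstance
    have hint2 : Integrable g p₂ := hbound inferInstance
    have hGg : Integrable (fun ω => G ω * g ω) p₁ := by
      have := (integrable_rnDeriv_smul_iff hac).mpr hint2
      simpa [smul_eq_mul, hGdef] using this
    have hchg : ∫ ω, g ω ∂p₂ = ∫ ω, G ω * g ω ∂p₁ := by
      rw [← integral_rnDeriv_smul hac]
      simp [smul_eq_mul, hGdef]
    rw [hchg, ← integral_sub hGg hint1]
    calc |∫ ω, (G ω * g ω - g ω) ∂p₁| ≤ ∫ ω, |G ω * g ω - g ω| ∂p₁ := by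
          simpa [Real.norm_eq_abs] using
            norm_integral_le_integral_norm (μ := p₁) (fun ω => G ω * g ω - g ω)
      _ ≤ ∫ ω, |G ω - 1| ∂p₁ := by
          refine integral_mono (hGg.sub hint1).abs hTint fun ω => ?_
          have : G ω * g ω - g ω = (G ω - 1) * g ω := by ring
          rw [this, abs_mul, abs_of_nonneg (hgb ω).1]
          nlinarith [abs_nonneg (G ω - 1), (hgb ω).2]
  have hd1 := hdiff f hfm hf
  have hd2 : |(∫ ω, f ω ^ 2 ∂p₂) - ∫ ω, f ω ^ 2 ∂p₁| ≤ T :=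
    hdiff (fun ω => f ω ^ 2) (hfm.pow_const 2)
      (fun ω => ⟨sq_nonneg _, by
        show f ω ^ 2 ≤ 1
        nlinarith [(hf ω).1, (hf ω).2]⟩)
  -- integrals are in [0,1]
  have hmean : ∀ {μ : Measure Ω}, IsProbabilityMeasure μ → Integrable f μ →
      (0 ≤ ∫ ω, f ω ∂μ ∧ ∫ ω, f ω ∂μ ≤ 1) := by
    intro μ hμ hint
    constructor
    · exact integral_nonneg fun ω => (hf ω).1
    · calc ∫ ω, f ω ∂μ ≤ ∫ _ω, (1:ℝ) ∂μ := integral_mono hint (integrable_const 1)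
            fun ω => (hf ω).2
        _ = 1 := by simp
  have hfint1 : Integrable f p₁ := by
    refine Integrable.mono' (integrable_const 1) hfm.aestronglyMeasurable ?_
    exact ae_of_all _ fun ω => by
      rw [Real.norm_eq_abs, abs_of_nonneg (hf ω).1]; exact (hf ω).2
  have hfint2 : Integrable f p₂ := by
    refine Integrable.mono' (integrable_const 1) hfm.aestronglyMeasurable ?_
    exact ae_of_all _ fun ω => by
      rw [Real.norm_eq_abs, abs_of_nonneg (hf ω).1]; exact (hf ω).2
  obtain ⟨ha1l, ha1u⟩ := hmean inferInstance hfint1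
  obtain ⟨ha2l, ha2u⟩ := hmean inferInstance hfint2
  obtain ⟨hd1l, hd1u⟩ := abs_le.mp hd1
  obtain ⟨hd2l, hd2u⟩ := abs_le.mp hd2
  constructor
  · linarith
  · unfold var at hεrobust ⊢
    have := psce_arith ha1l ha1u ha2l ha2u hT0 (by linarith) (by linarith) hεrobust hT2K
    linarith
end
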